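/- arXiv:2307.01887 — 3 statements merged into one kernel-verified Lean document; each statement's English description precedes it below -/
import Mathlib

section
/- Let q1(α,β) = a1α² + 2b1αβ + c1β² and q2(α,β) = a2α² + 2b2αβ + c2β² be real binary quadratic forms that are not proportional. If q1 and q2 have a common nontrivial real root (α0,β0) ≠ (0,0), i.e., q1(α0,β0) = q2(α0,β0) = 0, then the Jacobian form Jac(q1,q2) has (α0,β0) as a repeated root, i.e., Jac(q1,q2) is proportional to (β0·α − α0·β)². -/
/-- If two non-proportional real binary quadratic forms have a
common nontrivial real root `(α0, β0)`, then their Jacobian form has `(α0, β0)`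
as a repeated root, i.e. it is proportional to `(β0·α - α0·β)²`. -/
theorem jac_repeated_root (a1 b1 c1 a2 b2 c2 α0 β0 : ℝ)
    (hnp : ¬ ∃ s t : ℝ, ¬(s = 0 ∧ t = 0) ∧ s * a1 + t * a2 = 0 ∧ s * b1 + t * b2 = 0 ∧
      s * c1 + t * c2 = 0)
    (hroot : ¬(α0 = 0 ∧ β0 = 0))
    (h1 : a1 * α0 ^ 2 + 2 * b1 * α0 * β0 + c1 * β0 ^ 2 = 0)
    (h2 : a2 * α0 ^ 2 + 2 * b2 * α0 * β0 + c2 * β0 ^ 2 = 0) :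
    ∃ lam : ℝ, ∀ α β : ℝ,
      (a1 * b2 - b1 * a2) * α ^ 2 + (a1 * c2 - c1 * a2) * α * β + (b1 * c2 - c1 * b2) * β ^ 2
        = lam * (β0 * α - α0 * β) ^ 2 := by
  rcases not_and_or.mp hroot with hα | hβ
  · refine ⟨(b1 * c2 - c1 * b2) / α0 ^ 2, fun α β => ?_⟩
    field_simp
    linear_combination (α * β * c2 + α ^ 2 * b2) * h1 - (α * β * c1 + α ^ 2 * b1) * h2
  · refine ⟨(a1 * b2 - b1 * a2) / β0 ^ 2, fun α β => ?_⟩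
    field_simp
    linear_combination (α * β * a1 + β ^ 2 * b1) * h2 - (α * β * a2 + β ^ 2 * b2) * h1
end

section
/- Let Q1, Q2 be real binary quadratic forms satisfying the polarity condition P(Q1,Q2) = 0 (where P((A,2B,C),(a,2b,c)) = 2Bb − Ac − Ca), let r ∈ ℝ, Q3 = Q2 − r·Q1, Q4 = Jac(Q1,Q2), and Q5 = Jac(Q3,Q4). Then Q5 = −δ(Q2)·Q1 − r·δ(Q1)·Q2, and δ(Q5) = δ(Q1)·δ(Q2)·δ(Q3), where δ(Q3) = δ(Q2) + r²δ(Q1). -/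
/-- A binary quadratic form as a coefficient triple `(coef α², coef αβ, coef β²)`;
for `q = (a, 2b, c)` the discriminant is `δ(q) = b² - ac`. -/
noncomputable def qDelta (q : ℝ × ℝ × ℝ) : ℝ := (q.2.1 / 2) ^ 2 - q.1 * q.2.2

/-- The Jacobian of forms `(a1, 2b1, c1)` and `(a2, 2b2, c2)`: the triple
`(a1b2 - b1a2, a1c2 - c1a2, b1c2 - c1b2)`. -/
noncomputable def qJac (p q : ℝ × ℝ × ℝ) : ℝ × ℝ × ℝ :=
  (p.1 * (q.2.1 / 2) - (p.2.1 / 2) * q.1,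
   p.1 * q.2.2 - p.2.2 * q.1,
   (p.2.1 / 2) * q.2.2 - p.2.2 * (q.2.1 / 2))

/-- The polarity pairing of forms `(A, 2B, C)` and `(a, 2b, c)`:
`P = 2Bb - Ac - Ca`. -/
noncomputable def qPol (p q : ℝ × ℝ × ℝ) : ℝ :=
  2 * (p.2.1 / 2) * (q.2.1 / 2) - p.1 * q.2.2 - q.1 * p.2.2

/-- if `P(Q1,Q2) = 0`, `Q3 = Q2 - r·Q1`, `Q4 = Jac(Q1,Q2)` and
`Q5 = Jac(Q3,Q4)`, then `Q5 = -δ(Q2)·Q1 - r·δ(Q1)·Q2`,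
`δ(Q5) = δ(Q1)·δ(Q2)·δ(Q3)` and `δ(Q3) = δ(Q2) + r²·δ(Q1)`. -/
theorem characteristic_form_identities (Q1 Q2 Q3 Q4 Q5 : ℝ × ℝ × ℝ) (r : ℝ)
    (hP : qPol Q1 Q2 = 0) (hQ3 : Q3 = Q2 - r • Q1) (hQ4 : Q4 = qJac Q1 Q2)
    (hQ5 : Q5 = qJac Q3 Q4) :
    Q5 = -(qDelta Q2 • Q1) - (r * qDelta Q1) • Q2 ∧
    qDelta Q5 = qDelta Q1 * qDelta Q2 * qDelta Q3 ∧
    qDelta Q3 = qDelta Q2 + r ^ 2 * qDelta Q1 := by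
  obtain ⟨a1, b1, c1⟩ := Q1
  obtain ⟨a2, b2, c2⟩ := Q2
  subst hQ3 hQ4 hQ5
  simp only [qPol] at hP
  have h1 : qJac ((a2, b2, c2) - r • (a1, b1, c1)) (qJac (a1, b1, c1) (a2, b2, c2)) =
      -(qDelta (a2, b2, c2) • (a1, b1, c1)) - (r * qDelta (a1, b1, c1)) • (a2, b2, c2) := by
    simp only [qJac, qDelta, Prod.ext_iff, Prod.smul_mk, Prod.sub_def, Prod.neg_mk, smul_eq_mul]
    refine ⟨?_, ?_, ?_⟩
    · linear_combination ((a2 + r * a1) / 2) * hP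
    · linear_combination ((b2 + r * b1) / 2) * hP
    · linear_combination ((c2 + r * c1) / 2) * hP
  have h3 : qDelta ((a2, b2, c2) - r • (a1, b1, c1)) =
      qDelta (a2, b2, c2) + r ^ 2 * qDelta (a1, b1, c1) := by
    simp only [qDelta, Prod.sub_def, Prod.smul_mk, smul_eq_mul]
    linear_combination (-r) * hP
  refine ⟨h1, ?_, h3⟩
  rw [h1, h3]
  simp only [qDelta, Prod.sub_def, Prod.smul_mk, Prod.neg_mk, smul_eq_mul]
  linear_combination (r * ((b1/2)^2 - a1*c1) * ((b2/2)^2 - a2*c2)) * hP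
end

section
/- Let Q1 be a positive definite real binary quadratic form and Q2 a form with δ(Q2) > 0 (where δ(a,2b,c) = b² − ac), satisfying P(Q1,Q2) = 0, let r ∈ ℝ with r ≠ 0, Q3 = Q2 − rQ1 and Q5 = Jac(Q3, Jac(Q1,Q2)). Then exactly one of δ(Q3) > 0 or δ(Q5) > 0 holds, or both equal zero; more precisely δ(Q5) = δ(Q1)δ(Q2)δ(Q3) with δ(Q1) < 0 and δ(Q2) > 0, so δ(Q5) and δ(Q3) have opposite signs (and vanish simultaneously). Hence when Q3 = 0 has two real root directions (torsal directions), Q5 = 0 has none (characteristic directions are imaginary), and vice versa. -/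
/-- Evaluation of the coefficient triple as a quadratic form. -/
noncomputable def qEval (q : ℝ × ℝ × ℝ) (x y : ℝ) : ℝ :=
  q.1 * x ^ 2 + q.2.1 * x * y + q.2.2 * y ^ 2

/-- for `Q1` positive definite, `δ(Q2) > 0`, `P(Q1,Q2) = 0`,
`r ≠ 0`, `Q3 = Q2 - r·Q1` and `Q5 = Jac(Q3, Jac(Q1,Q2))`:
`δ(Q5) = δ(Q1)·δ(Q2)·δ(Q3)` with `δ(Q1) < 0` and `δ(Q2) > 0`, so `δ(Q5)` and
`δ(Q3)` have opposite signs and vanish simultaneously: when the torsal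
directions (`Q3 = 0`) are real the characteristic ones (`Q5 = 0`) are
imaginary and vice versa. -/
theorem torsal_characteristic_opposite (Q1 Q2 Q3 Q5 : ℝ × ℝ × ℝ) (r : ℝ) (hr : r ≠ 0)
    (hpos : ∀ x y : ℝ, ¬(x = 0 ∧ y = 0) → 0 < qEval Q1 x y)
    (hδ2 : 0 < qDelta Q2) (hP : qPol Q1 Q2 = 0)
    (hQ3 : Q3 = Q2 - r • Q1) (hQ5 : Q5 = qJac Q3 (qJac Q1 Q2)) :
    qDelta Q5 = qDelta Q1 * qDelta Q2 * qDelta Q3 ∧ qDelta Q1 < 0 ∧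
    (0 < qDelta Q3 ↔ qDelta Q5 < 0) ∧ (qDelta Q3 = 0 ↔ qDelta Q5 = 0) ∧
    (qDelta Q3 < 0 ↔ 0 < qDelta Q5) := by
  obtain ⟨a1, p1, c1⟩ := Q1
  obtain ⟨a2, p2, c2⟩ := Q2
  have ha1 : 0 < a1 := by simpa [qEval] using hpos 1 0 (by norm_num)
  have hδ1 : qDelta (a1, p1, c1) < 0 := by
    have h2 := hpos p1 (-2 * a1) (by intro h; exact absurd h.2 (by nlinarith))
    simp only [qEval, qDelta] at h2 ⊢
    nlinarith [h2]
  subst hQ3 hQ5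
  have hkey : qDelta (qJac ((a2, p2, c2) - r • (a1, p1, c1)) (qJac (a1, p1, c1) (a2, p2, c2)))
      = qDelta (a1, p1, c1) * qDelta (a2, p2, c2)
        * qDelta ((a2, p2, c2) - r • (a1, p1, c1)) := by
    simp only [qDelta, qJac, Prod.fst_sub, Prod.snd_sub, Prod.smul_fst, Prod.smul_snd,
      smul_eq_mul]
    simp only [qPol] at hP
    linear_combination ((1/16)*c1*a2*p2^2 + (-1/4)*c1*a2^2*c2 + (1/4)*c1^2*a2^2*r
      + (-1/32)*p1*p2^3 + (1/8)*p1*a2*p2*c2 + (-1/4)*p1*c1*a2*p2*r + (1/16)*p1^2*p2^2*r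
      + (1/16)*p1^2*c1*a2*r^2 + (-1/32)*p1^3*p2*r^2 + (1/16)*a1*p2^2*c2
      + (-1/4)*a1*a2*c2^2 + (1/2)*a1*c1*a2*c2*r + (-1/4)*a1*c1^2*a2*r^2
      + (-1/4)*a1*p1*p2*c2*r + (1/8)*a1*p1*c1*p2*r^2 + (1/16)*a1*p1^2*c2*r^2
      + (1/4)*a1^2*c2^2*r + (-1/4)*a1^2*c1*c2*r^2) * hP
  have hu : qDelta (a1, p1, c1) * qDelta (a2, p2, c2) < 0 :=
    mul_neg_of_neg_of_pos hδ1 hδ2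
  refine ⟨hkey, hδ1, ?_, ?_, ?_⟩
  · rw [hkey]
    exact ⟨fun h => mul_neg_of_neg_of_pos hu h,
      fun h => by
        by_contra h3
        push_neg at h3
        nlinarith [mul_nonneg (neg_nonneg.mpr hu.le) (neg_nonneg.mpr h3)]⟩
  · rw [hkey]
    exact ⟨fun h => by rw [h]; ring,
      fun h => (mul_eq_zero.mp h).resolve_left hu.ne⟩
  · rw [hkey]
    exact ⟨fun h => mul_pos_of_neg_of_neg hu h,
      fun h => by
        by_contra h3
        push_neg at h3
        nlinarith [mul_nonneg (neg_nonneg.mpr hu.le) h3]⟩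
end
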